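/- Let M be a 3×3 real symmetric positive definite matrix, g: S² → ℝ continuous, and define F(x) = ∫_{S²} max(1 − α(x,ω)², 0) · g(ω) (Mω·ω)^{-1/2} dH²(ω), where α(x,ω) = (x·ω)(Mω·ω)^{-1/2}. Then for every x in the interior of E = { y ∈ ℝ³ : M⁻¹y · y ≤ 1 }, F(x) = ∫_{S²} g(ω) (Mω·ω)^{-1/2} dH²(ω) − Σ_{i,j=1}^{3} x_i x_j ∫_{S²} ω_i ω_j g(ω) (Mω·ω)^{-3/2} dH²(ω); in particular, F restricted to E is a quadratic polynomial. -/

import Mathlib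

open MeasureTheory Metric Matrix
open scoped ENNReal

noncomputable section

abbrev E3 := EuclideanSpace ℝ (Fin 3)

/-- The anisotropic kernel `W(x) = |x|⁻¹ Ψ(x/|x|)` as a real-valued function. -/
def W (Ψ : E3 → ℝ) (x : E3) : ℝ := ‖x‖⁻¹ * Ψ (‖x‖⁻¹ • x)

open Classical in
/-- The kernel with the convention `W(0) = +∞`, with values in `ℝ≥0∞`. -/
def kern (Ψ : E3 → ℝ) (x : E3) : ℝ≥0∞ :=
  if x = 0 then ∞ else ENNReal.ofReal (W Ψ x)

/-- The nonlocal energy `I(μ) = ∬ W(x-y) dμ(y) dμ(x) + ∫ |x|² dμ(x)`. -/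
def energy (Ψ : E3 → ℝ) (μ : Measure E3) : ℝ≥0∞ :=
  (∫⁻ x, ∫⁻ y, kern Ψ (x - y) ∂μ ∂μ) + ∫⁻ x, ENNReal.ofReal (‖x‖ ^ 2) ∂μ

/-- Fourier transform with the convention `φ̂(ξ) = (2π)^{-3/2} ∫ φ(x) e^{-i ξ·x} dx`. -/
def ftransform (φ : E3 → ℂ) (ξ : E3) : ℂ :=
  ((((2 * Real.pi) ^ ((3:ℝ)/2))⁻¹ : ℝ) : ℂ) *
    ∫ x : E3, φ x * Complex.exp (-((inner ℝ ξ x : ℝ) : ℂ) * Complex.I)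

/-- The hypothesis that the Fourier transform of `W` is `h(ξ/|ξ|)|ξ|⁻²`, in the sense of
tempered distributions: `∫ W(x) φ̂(x) dx = ∫ h(ξ/|ξ|)|ξ|⁻² φ(ξ) dξ` for every Schwartz `φ`. -/
def FourierRep (Ψ h : E3 → ℝ) : Prop :=
  ∀ φ : SchwartzMap E3 ℂ,
    ∫ x : E3, (W Ψ x : ℂ) * ftransform (fun y => φ y) x
      = ∫ ξ : E3, ((h (‖ξ‖⁻¹ • ξ) : ℝ) : ℂ) * (((‖ξ‖ ^ 2)⁻¹ : ℝ) : ℂ) * φ ξ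

/-- Membership in `SO(3)`. -/
def IsSO3 (R : Matrix (Fin 3) (Fin 3) ℝ) : Prop := R * Rᵀ = 1 ∧ R.det = 1

/-- The solid ellipsoid `R D(a) B̄`. -/
def ellipsoid (a : Fin 3 → ℝ) (R : Matrix (Fin 3) (Fin 3) ℝ) : Set E3 :=
  (Matrix.toEuclideanLin (R * Matrix.diagonal a)) '' Metric.closedBall 0 1

/-- The ellipsoid law: normalised Lebesgue measure on the ellipsoid. -/
def ellipsoidLaw (a : Fin 3 → ℝ) (R : Matrix (Fin 3) (Fin 3) ℝ) : Measure E3 :=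
  (volume (ellipsoid a R))⁻¹ • volume.restrict (ellipsoid a R)

/-- The semi-ellipsoid law supported on the ellipse `R Ẽ₀(a₁,a₂)`: the pushforward under
`(x₁,x₂) ↦ R(x₁,x₂,0)` of the measure on `ℝ²` with density
`(3/(2π a₁ a₂))·√(1 − x₁²/a₁² − x₂²/a₂²)` (the density vanishes outside the ellipse). -/
def semiEllipsoidLaw (a₁ a₂ : ℝ) (R : Matrix (Fin 3) (Fin 3) ℝ) : Measure E3 :=
  Measure.map
    (fun p : ℝ × ℝ =>
      Matrix.toEuclideanLin R ((EuclideanSpace.equiv (Fin 3) ℝ).symm ![p.1, p.2, 0]))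
    ((volume : Measure (ℝ × ℝ)).withDensity fun p =>
      ENNReal.ofReal ((3 / (2 * Real.pi * a₁ * a₂)) *
        Real.sqrt (1 - p.1 ^ 2 / a₁ ^ 2 - p.2 ^ 2 / a₂ ^ 2)))

/-- The quadratic form `Mω·ω`. -/
def qf (M : Matrix (Fin 3) (Fin 3) ℝ) (ω : E3) : ℝ := inner ℝ (Matrix.toEuclideanLin M ω) ω

/-- `α(x,ω) = (x·ω)(Mω·ω)^{-1/2}`. -/
def alphaM (M : Matrix (Fin 3) (Fin 3) ℝ) (x ω : E3) : ℝ :=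
  (inner ℝ x ω : ℝ) / Real.sqrt (qf M ω)

/-- `F(x) = ∫_{S²} max(1 − α(x,ω)², 0) g(ω) (Mω·ω)^{-1/2} dH²(ω)`. -/
def Ffun (M : Matrix (Fin 3) (Fin 3) ℝ) (g : E3 → ℝ) (x : E3) : ℝ :=
  ∫ ω in Metric.sphere (0:E3) 1,
    max (1 - alphaM M x ω ^ 2) 0 * g ω * (Real.sqrt (qf M ω))⁻¹ ∂μH[2]

set_option maxHeartbeats 1000000
open scoped NNReal

lemma lip_radial : LipschitzOnWith 2 (fun x : E3 => ‖x‖⁻¹ • x) {x | 1 ≤ ‖x‖} := by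
  rw [lipschitzOnWith_iff_dist_le_mul]
  intro x hx y hy
  simp only [Set.mem_setOf_eq] at hx hy
  have hx0 : (0:ℝ) < ‖x‖ := lt_of_lt_of_le one_pos hx
  have hy0 : (0:ℝ) < ‖y‖ := lt_of_lt_of_le one_pos hy
  rw [dist_eq_norm, dist_eq_norm]
  have key : ‖x‖⁻¹ • x - ‖y‖⁻¹ • y = ‖x‖⁻¹ • (x - y) + (‖x‖⁻¹ - ‖y‖⁻¹) • y := by
    rw [smul_sub, sub_smul]; abel
  rw [key]
  have h1 : ‖‖x‖⁻¹ • (x - y)‖ ≤ ‖x - y‖ := by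
    rw [norm_smul, norm_inv, norm_norm]
    calc ‖x‖⁻¹ * ‖x - y‖ ≤ 1 * ‖x - y‖ := by
          gcongr; exact inv_le_one_of_one_le₀ hx
      _ = ‖x - y‖ := one_mul _
  have h2 : ‖(‖x‖⁻¹ - ‖y‖⁻¹) • y‖ ≤ ‖x - y‖ := by
    rw [norm_smul, norm_sub_rev x y, Real.norm_eq_abs]
    have e0 : ‖x‖⁻¹ - ‖y‖⁻¹ = (‖y‖ - ‖x‖) / (‖x‖ * ‖y‖) := by field_simp
    have e1 : |‖x‖⁻¹ - ‖y‖⁻¹| * ‖y‖ = |‖y‖ - ‖x‖| / ‖x‖ := by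
      rw [e0, abs_div, abs_of_pos (mul_pos hx0 hy0)]
      field_simp
    rw [e1]
    calc |‖y‖ - ‖x‖| / ‖x‖ ≤ ‖y - x‖ / ‖x‖ := by
          gcongr
          exact abs_norm_sub_norm_le y x
      _ ≤ ‖y - x‖ := div_le_self (norm_nonneg _) hx
  calc ‖‖x‖⁻¹ • (x - y) + (‖x‖⁻¹ - ‖y‖⁻¹) • y‖ ≤ ‖‖x‖⁻¹ • (x - y)‖ + ‖(‖x‖⁻¹ - ‖y‖⁻¹) • y‖ :=
        norm_add_le _ _
    _ ≤ ‖x - y‖ + ‖x - y‖ := add_le_add h1 h2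
    _ = 2 * ‖x - y‖ := by ring

def insMap (i : Fin 3) (c : ℝ) : EuclideanSpace ℝ (Fin 2) → E3 :=
  fun p => WithLp.toLp 2 (i.insertNth c (fun j => p j))

lemma insMap_isometry (i : Fin 3) (c : ℝ) : Isometry (insMap i c) := by
  apply Isometry.of_dist_eq
  intro p q
  rw [show insMap i c p = (WithLp.toLp 2 (i.insertNth c (fun j => p j)) : E3) from rfl,
    show insMap i c q = (WithLp.toLp 2 (i.insertNth c (fun j => q j)) : E3) from rfl]
  rw [EuclideanSpace.dist_eq, EuclideanSpace.dist_eq p q]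
  congr 1
  rw [Fin.sum_univ_succAbove
    (fun j => dist ((WithLp.toLp 2 (i.insertNth c (fun j => p j)) : E3) j) ((WithLp.toLp 2 (i.insertNth c (fun j => q j)) : E3) j) ^ 2) i]
  simp [Fin.insertNth_apply_same, Fin.insertNth_apply_succAbove]

lemma hausdorff_sphere_finite : μH[2] (Metric.sphere (0:E3) 1) < ∞ := by
  classical
  set f : E3 → E3 := fun x => ‖x‖⁻¹ • x with hf
  set T : Fin 3 → Bool → Set E3 := fun i ε =>
    {x : E3 | x i = (if ε then 1 else -1) ∧ ‖x‖ ≤ Real.sqrt 3} with hT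
  have hTA : ∀ i ε, T i ε ⊆ {x : E3 | 1 ≤ ‖x‖} := by
    intro i ε x hx
    have h1 : |x i| = 1 := by rcases hx.1 with h; cases ε <;> simp [h]
    have : |x i| ≤ ‖x‖ := by
      rw [EuclideanSpace.norm_eq]
      have h2 : |x i| = Real.sqrt (|x i| ^ 2) := by
        rw [Real.sqrt_sq (abs_nonneg _)]
      rw [h2]
      apply Real.sqrt_le_sqrt
      rw [sq_abs]
      refine Finset.single_le_sum (f := fun j => ‖x j‖ ^ 2)
        (fun j _ => by positivity) (Finset.mem_univ i) |>.trans_eq' ?_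
      simp [Real.norm_eq_abs, sq_abs]
    simpa [h1] using this
  have cover : Metric.sphere (0:E3) 1 ⊆ ⋃ i : Fin 3, ⋃ ε : Bool, f '' T i ε := by
    intro ω hω
    have hnorm : ‖ω‖ = 1 := by simpa using hω
    have hsum : ∑ j, ω j ^ 2 = 1 := by
      have := congrArg (· ^ 2) (EuclideanSpace.norm_eq ω)
      simp only [hnorm] at this
      rw [Real.sq_sqrt (by positivity)] at this
      simpa [Real.norm_eq_abs, sq_abs] using this.symm
    have hex : ∃ i : Fin 3, 1/3 ≤ ω i ^ 2 := by
      by_contra h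
      push_neg at h
      have : ∑ j : Fin 3, ω j ^ 2 < ∑ _j : Fin 3, (1/3 : ℝ) :=
        Finset.sum_lt_sum_of_nonempty (by simp) (fun j _ => h j)
      simp [hsum] at this
    obtain ⟨i, hi⟩ := hex
    have hai : (0:ℝ) < |ω i| := by
      rw [abs_pos]; intro h; rw [h] at hi; norm_num at hi
    set ε : Bool := decide (0 < ω i) with hε
    refine Set.mem_iUnion.2 ⟨i, Set.mem_iUnion.2 ⟨ε, ⟨|ω i|⁻¹ • ω, ⟨?_, ?_⟩, ?_⟩⟩⟩
    · show |ω i|⁻¹ * ω i = _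
      rcases lt_trichotomy (ω i) 0 with h | h | h
      · have hεf : ε = false := by simp [hε, not_lt.2 h.le]
        rw [hεf, abs_of_neg h]
        simp only [if_false]
        rw [inv_neg, neg_mul, inv_mul_cancel₀ (ne_of_lt h)]
        simp
      · exact absurd h (by intro h'; rw [h'] at hai; simp at hai)
      · have hεt : ε = true := by simp [hε, h]
        rw [hεt, abs_of_pos h, if_pos rfl, inv_mul_cancel₀ (ne_of_gt h)]
    · show ‖|ω i|⁻¹ • ω‖ ≤ _
      rw [norm_smul, Real.norm_eq_abs, abs_inv, abs_abs, hnorm, mul_one]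
      rw [inv_le_comm₀ hai (by positivity), ← Real.sqrt_inv]
      calc Real.sqrt 3⁻¹ ≤ Real.sqrt (ω i ^ 2) := Real.sqrt_le_sqrt (by linarith)
        _ = |ω i| := Real.sqrt_sq_eq_abs _
    · show f _ = ω
      rw [hf]
      simp only [norm_smul, Real.norm_eq_abs, abs_inv, abs_abs, hnorm, mul_one, smul_smul]
      rw [inv_inv, mul_inv_cancel₀ (ne_of_gt hai), one_smul]
  have hball : μH[(2:ℝ)] (Metric.closedBall (0 : EuclideanSpace ℝ (Fin 2)) (Real.sqrt 3)) < ∞ := by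
    haveI : IsFiniteMeasureOnCompacts (μH[(2:ℝ)] : Measure (EuclideanSpace ℝ (Fin 2))) := by
      have h : ((Module.finrank ℝ (EuclideanSpace ℝ (Fin 2)) : ℕ) : ℝ) = 2 := by
        simp
      rw [← h]
      infer_instance
    exact (isCompact_closedBall _ _).measure_lt_top
  have hpiece : ∀ (i : Fin 3) (ε : Bool), μH[(2:ℝ)] (f '' T i ε) < ∞ := by
    intro i ε
    set c : ℝ := if ε then 1 else -1 with hc
    have hsub : T i ε ⊆ (insMap i c) ''
        (Metric.closedBall 0 (Real.sqrt 3)) := by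
      intro x hx
      refine ⟨WithLp.toLp 2 (fun j => x (i.succAbove j)), ?_, ?_⟩
      · rw [mem_closedBall, dist_zero_right]
        refine le_trans ?_ hx.2
        rw [EuclideanSpace.norm_eq, EuclideanSpace.norm_eq]
        apply Real.sqrt_le_sqrt
        rw [Fin.sum_univ_succAbove (fun j => ‖x j‖ ^ 2) i]
        have : (0:ℝ) ≤ ‖x i‖ ^ 2 := by positivity
        linarith [le_refl (∑ j : Fin 2, ‖x (i.succAbove j)‖ ^ 2)]
      · show (WithLp.toLp 2 (i.insertNth c (fun j => x (i.succAbove j))) : E3) = x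
        have hcx : c = x i := by rw [hc, hx.1]
        rw [hcx]
        exact congrArg (WithLp.toLp 2) (Fin.insertNth_self_removeNth i x.ofLp)
    have hlip : LipschitzOnWith 2 f (T i ε) := lip_radial.mono (hTA i ε)
    calc μH[(2:ℝ)] (f '' T i ε) ≤ (((2:ℝ≥0)) : ℝ≥0∞) ^ (2:ℝ) * μH[(2:ℝ)] (T i ε) := by
          exact hlip.hausdorffMeasure_image_le (by norm_num : (0:ℝ) ≤ 2)
      _ ≤ (((2:ℝ≥0)) : ℝ≥0∞) ^ (2:ℝ) * μH[(2:ℝ)]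
            ((insMap i c) ''
              (Metric.closedBall 0 (Real.sqrt 3))) := by
          gcongr

      _ = (((2:ℝ≥0)) : ℝ≥0∞) ^ (2:ℝ) *
            μH[(2:ℝ)] (Metric.closedBall (0 : EuclideanSpace ℝ (Fin 2)) (Real.sqrt 3)) := by
          rw [(insMap_isometry i c).hausdorffMeasure_image (Or.inl (by norm_num))]
      _ < ∞ := by
          apply ENNReal.mul_lt_top _ hball
          exact ENNReal.rpow_lt_top_of_nonneg (by norm_num) ENNReal.coe_ne_top
  refine lt_of_le_of_lt ((measure_mono cover).trans (measure_iUnion_le _)) ?_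
  rw [tsum_fintype]
  refine ENNReal.sum_lt_top.2 fun i _ => ?_
  refine lt_of_le_of_lt (measure_iUnion_le _) ?_
  rw [tsum_fintype]
  exact ENNReal.sum_lt_top.2 fun ε _ => hpiece i ε

lemma qf_dot (A : Matrix (Fin 3) (Fin 3) ℝ) (v : E3) :
    qf A v = star (WithLp.equiv 2 (Fin 3 → ℝ) v) ⬝ᵥ (A *ᵥ (WithLp.equiv 2 (Fin 3 → ℝ) v)) := by
  simp [qf, PiLp.inner_apply, RCLike.inner_apply, Matrix.toEuclideanLin_apply, dotProduct,
    mul_comm]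

lemma qf_pos {M : Matrix (Fin 3) (Fin 3) ℝ} (hM : M.PosDef) {v : E3} (hv : v ≠ 0) :
    0 < qf M v := by
  rw [qf_dot]
  exact hM.dotProduct_mulVec_pos (fun h => hv ((WithLp.equiv 2 (Fin 3 → ℝ)).injective (by simpa using h)))

lemma qf_nonneg {M : Matrix (Fin 3) (Fin 3) ℝ} (hM : M.PosDef) (v : E3) :
    0 ≤ qf M v := by
  rcases eq_or_ne v 0 with rfl | hv
  · rw [qf]; simp
  · exact (qf_pos hM hv).le

lemma qf_smul (A : Matrix (Fin 3) (Fin 3) ℝ) (t : ℝ) (v : E3) :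
    qf A (t • v) = t ^ 2 * qf A v := by
  simp only [qf, _root_.map_smul, real_inner_smul_left, real_inner_smul_right, smul_eq_mul]
  ring

lemma toEuclideanLin_inv_cancel {M : Matrix (Fin 3) (Fin 3) ℝ} (hM : M.PosDef) (x : E3) :
    Matrix.toEuclideanLin M (Matrix.toEuclideanLin M⁻¹ x) = x := by
  have hdet : IsUnit M.det := isUnit_iff_ne_zero.2 hM.det_pos.ne'
  rw [Matrix.toEuclideanLin_apply, Matrix.toEuclideanLin_apply]
  rw [show (WithLp.toLp 2 (M⁻¹ *ᵥ x.ofLp)).ofLp = M⁻¹ *ᵥ x.ofLp from rfl]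
  rw [Matrix.mulVec_mulVec, Matrix.mul_nonsing_inv _ hdet, Matrix.one_mulVec]

lemma qf_cs {M : Matrix (Fin 3) (Fin 3) ℝ} (hM : M.PosDef) (x ω : E3) :
    (inner ℝ x ω : ℝ) ^ 2 ≤ qf M⁻¹ x * qf M ω := by
  have hsym : (Matrix.toEuclideanLin M).IsSymmetric :=
    Matrix.isHermitian_iff_isSymmetric.1 hM.1
  set T := Matrix.toEuclideanLin M with hT
  set u : E3 := Matrix.toEuclideanLin M⁻¹ x with hu
  have hTu : T u = x := toEuclideanLin_inv_cancel hM x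
  have hqu : qf M u = qf M⁻¹ x := by
    rw [qf, hTu, qf]
    exact real_inner_comm _ _
  have hsymc : (inner ℝ (T ω) u : ℝ) = inner ℝ x ω := by
    rw [hsym ω u, ← hTu]
    exact real_inner_comm _ _
  have hTux : (inner ℝ (T u) ω : ℝ) = inner ℝ x ω := by rw [hTu]
  have expand : ∀ t : ℝ, 0 ≤ qf M ω * (t * t) + (2 * (inner ℝ x ω : ℝ)) * t + qf M⁻¹ x := by
    intro t
    have h0 : 0 ≤ qf M (u + t • ω) := qf_nonneg hM _
    have e : qf M (u + t • ω)
        = qf M u + t * (inner ℝ (T u) ω : ℝ) + t * (inner ℝ (T ω) u : ℝ) + t * t * qf M ω := by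
      simp only [qf, map_add, _root_.map_smul, inner_add_left, inner_add_right,
        real_inner_smul_left, real_inner_smul_right, smul_eq_mul, ← hT]
      ring
    rw [e, hqu, hsymc, hTux] at h0
    linarith
  have hd := discrim_le_zero expand
  rw [discrim] at hd
  nlinarith [hd]

lemma qf_interior_lt_one {M : Matrix (Fin 3) (Fin 3) ℝ} (hM : M.PosDef) {x : E3}
    (hx : x ∈ interior {y : E3 | qf M⁻¹ y ≤ 1}) : qf M⁻¹ x < 1 := by
  have hle : qf M⁻¹ x ≤ 1 := (interior_subset hx : x ∈ {y : E3 | qf M⁻¹ y ≤ 1})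
  rcases lt_or_eq_of_le hle with h | h
  · exact h
  · exfalso
    obtain ⟨ε, hε, hball⟩ := Metric.isOpen_iff.1 isOpen_interior x hx
    have hd : (0:ℝ) < ‖x‖ + 1 := by positivity
    set δ : ℝ := ε / (2 * (‖x‖ + 1)) with hδdef
    have hδ : 0 < δ := by positivity
    have hmem : (1 + δ) • x ∈ Metric.ball x ε := by
      rw [mem_ball, dist_eq_norm]
      have e1 : (1 + δ) • x - x = δ • x := by rw [add_smul, one_smul]; abel
      rw [e1, norm_smul, Real.norm_eq_abs, abs_of_pos hδ]
      calc δ * ‖x‖ ≤ δ * (‖x‖ + 1) := by nlinarith [norm_nonneg x]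
        _ = ε / 2 := by rw [hδdef]; field_simp
        _ < ε := by linarith
    have hsub : (1 + δ) • x ∈ {y : E3 | qf M⁻¹ y ≤ 1} := interior_subset (hball hmem)
    have e2 : qf M⁻¹ ((1 + δ) • x) = (1 + δ) ^ 2 * qf M⁻¹ x := qf_smul _ _ _
    have hsub2 : (1 + δ) ^ 2 * qf M⁻¹ x ≤ 1 := by rw [← e2]; exact hsub
    rw [← h] at hsub2
    nlinarith [hδ, hsub2]

lemma sphere_finiteMeasure : IsFiniteMeasure (μH[2].restrict (Metric.sphere (0:E3) 1)) := by
  constructor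
  rw [Measure.restrict_apply_univ]
  exact hausdorff_sphere_finite

lemma integrableOn_sphere {f : E3 → ℝ} (hf : ContinuousOn f (Metric.sphere (0:E3) 1)) :
    IntegrableOn f (Metric.sphere (0:E3) 1) μH[2] := by
  haveI := sphere_finiteMeasure
  refine ⟨hf.aestronglyMeasurable_of_isCompact (isCompact_sphere 0 1)
    (isClosed_sphere.measurableSet), ?_⟩
  obtain ⟨C, hC⟩ := isBounded_iff_forall_norm_le.1
    ((isCompact_sphere (0:E3) 1).image_of_continuousOn hf).isBounded
  apply HasFiniteIntegral.of_bounded (C := C)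
  filter_upwards [ae_restrict_mem isClosed_sphere.measurableSet] with ω hω
  exact hC _ ⟨ω, hω, rfl⟩

lemma inner_eq_sum (x ω : E3) : (inner ℝ x ω : ℝ) = ∑ i, x i * ω i := by
  simp [PiLp.inner_apply, RCLike.inner_apply, conj_trivial, mul_comm]

lemma coord_continuous (i : Fin 3) : Continuous fun ω : E3 => ω i :=
  (continuous_apply i).comp (PiLp.continuous_ofLp 2 (fun _ : Fin 3 => ℝ))

lemma qf_continuous (M : Matrix (Fin 3) (Fin 3) ℝ) : Continuous (qf M) :=
  Continuous.inner (Matrix.toEuclideanLin M).continuous_of_finiteDimensional continuous_id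


/-- on the interior of the ellipsoid `E = {y : M⁻¹y·y ≤ 1}`, `F` equals the
explicit quadratic polynomial
`∫ g(ω)(Mω·ω)^{-1/2} dH² − ∑_{i,j} x_i x_j ∫ ω_i ω_j g(ω)(Mω·ω)^{-3/2} dH²`. -/
theorem Ffun_quadratic_inside
    (M : Matrix (Fin 3) (Fin 3) ℝ) (hM : M.PosDef)
    (g : E3 → ℝ) (hg : ContinuousOn g (Metric.sphere (0:E3) 1))
    (x : E3) (hx : x ∈ interior {y : E3 | qf M⁻¹ y ≤ 1}) :
    Ffun M g x
      = (∫ ω in Metric.sphere (0:E3) 1, g ω * (Real.sqrt (qf M ω))⁻¹ ∂μH[2])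
        - ∑ i : Fin 3, ∑ j : Fin 3, x i * x j *
            ∫ ω in Metric.sphere (0:E3) 1,
              ω i * ω j * g ω * ((qf M ω) ^ ((3:ℝ)/2))⁻¹ ∂μH[2] := by
  classical
  have hxlt : qf M⁻¹ x < 1 := qf_interior_lt_one hM hx
  have hq0 : ∀ ω ∈ Metric.sphere (0:E3) 1, 0 < qf M ω := by
    intro ω hω
    refine qf_pos hM (fun h0 => ?_)
    rw [mem_sphere_zero_iff_norm] at hω
    rw [h0] at hω
    simp at hω
  have hqc := qf_continuous M
  have hsqrtc : ContinuousOn (fun ω => (Real.sqrt (qf M ω))⁻¹) (Metric.sphere (0:E3) 1) :=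
    (Real.continuous_sqrt.comp_continuousOn hqc.continuousOn).inv₀
      (fun ω hω => (Real.sqrt_ne_zero'.2 (hq0 ω hω)))
  have h32c : ContinuousOn (fun ω => ((qf M ω) ^ ((3:ℝ)/2))⁻¹) (Metric.sphere (0:E3) 1) :=
    (ContinuousOn.rpow_const hqc.continuousOn
      (fun ω hω => Or.inl (hq0 ω hω).ne')).inv₀
      (fun ω hω => (Real.rpow_pos_of_pos (hq0 ω hω) _).ne')
  have hf1 : IntegrableOn (fun ω => g ω * (Real.sqrt (qf M ω))⁻¹)
      (Metric.sphere (0:E3) 1) μH[2] := integrableOn_sphere (hg.mul hsqrtc)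
  have hfij : ∀ i j : Fin 3,
      IntegrableOn (fun ω => ω i * ω j * g ω * ((qf M ω) ^ ((3:ℝ)/2))⁻¹)
        (Metric.sphere (0:E3) 1) μH[2] := fun i j =>
    integrableOn_sphere ((((coord_continuous i).continuousOn.mul
      (coord_continuous j).continuousOn).mul hg).mul h32c)
  have key : ∀ a b s : ℝ, s ≠ 0 →
      (1 - (a / s) ^ 2) * b * s⁻¹ = b * s⁻¹ - a ^ 2 * (b * ((s ^ 3)⁻¹)) := by
    intro a b s hs
    field_simp
  have step1 : Ffun M g x = ∫ ω in Metric.sphere (0:E3) 1,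
      (g ω * (Real.sqrt (qf M ω))⁻¹
        - ∑ i, ∑ j, x i * x j * (ω i * ω j * g ω * ((qf M ω) ^ ((3:ℝ)/2))⁻¹)) ∂μH[2] := by
    rw [Ffun]
    refine setIntegral_congr_fun isClosed_sphere.measurableSet (fun ω hω => ?_)
    have hq := hq0 ω hω
    have hs : Real.sqrt (qf M ω) ≠ 0 := (Real.sqrt_pos.2 hq).ne'
    have hα2 : alphaM M x ω ^ 2 = (inner ℝ x ω : ℝ) ^ 2 / qf M ω := by
      rw [alphaM, div_pow, Real.sq_sqrt hq.le]
    have hle1 : alphaM M x ω ^ 2 ≤ qf M⁻¹ x := by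
      rw [hα2, div_le_iff₀ hq]
      exact qf_cs hM x ω
    have hmax : max (1 - alphaM M x ω ^ 2) 0 = 1 - alphaM M x ω ^ 2 :=
      max_eq_left (by linarith)
    have hc3 : (qf M ω) ^ ((3:ℝ)/2) = (Real.sqrt (qf M ω)) ^ 3 := by
      rw [Real.sqrt_eq_rpow, ← Real.rpow_natCast ((qf M ω) ^ ((1:ℝ)/2)) 3,
        ← Real.rpow_mul hq.le]
      norm_num
    have hsum : ∑ i, ∑ j, x i * x j * (ω i * ω j * g ω * ((qf M ω) ^ ((3:ℝ)/2))⁻¹)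
        = (inner ℝ x ω : ℝ) ^ 2 * (g ω * (((Real.sqrt (qf M ω)) ^ 3)⁻¹)) := by
      set c : ℝ := ((qf M ω) ^ ((3:ℝ)/2))⁻¹ with hcdef
      have e1 : ∑ i, ∑ j, x i * x j * (ω i * ω j * g ω * c)
          = ∑ i, ∑ j, (x i * ω i) * (x j * ω j) * (g ω * c) :=
        Finset.sum_congr rfl fun i _ => Finset.sum_congr rfl fun j _ => by ring
      have e2 : (∑ i, x i * ω i) * (∑ j, x j * ω j) * (g ω * c)
          = ∑ i, ∑ j, (x i * ω i) * (x j * ω j) * (g ω * c) := by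
        rw [Finset.sum_mul_sum, Finset.sum_mul]
        refine Finset.sum_congr rfl fun i _ => ?_
        rw [Finset.sum_mul]
      rw [e1, ← e2, inner_eq_sum, sq, hcdef, hc3]
    rw [hmax, hsum, alphaM, key _ _ _ hs]
  rw [step1]
  have hint2 : IntegrableOn
      (fun ω => ∑ i, ∑ j, x i * x j * (ω i * ω j * g ω * ((qf M ω) ^ ((3:ℝ)/2))⁻¹))
      (Metric.sphere (0:E3) 1) μH[2] :=
    integrable_finset_sum _ fun i _ => integrable_finset_sum _ fun j _ =>
      ((hfij i j).const_mul _)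
  rw [integral_sub hf1 hint2]
  congr 1
  rw [integral_finset_sum _ (fun i _ => integrable_finset_sum _ fun j _ =>
    ((hfij i j).const_mul _))]
  refine Finset.sum_congr rfl fun i _ => ?_
  rw [integral_finset_sum _ (fun j _ => ((hfij i j).const_mul _))]
  refine Finset.sum_congr rfl fun j _ => ?_
  exact integral_const_mul _ _

end
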